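/- If m has a unique divisor d with n - √n < d ≤ n, and k := n - d satisfies 1 ≤ k < √n, then for any permutation π of {1, ..., n} with ord(π) = m, either π has a cycle of length d and the rest of π (restricted to the remaining k points) has order σ with lcm(σ, d) = m, or π has no cycle of length exceeding n - √n. -/
import Mathlib

theorem stmt_19 (n m d k : ℕ) (hn : 4 ≤ n) (hm : 0 < m)
    (hd : d ∣ m) (hd₁ : (n : ℝ) - Real.sqrt n < d) (hd₂ : d ≤ n)
    (huniq : ∀ d' : ℕ, d' ∣ m → (n : ℝ) - Real.sqrt n < d' → d' ≤ n → d' = d)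
    (hk : k = n - d) (hk₁ : 1 ≤ k) (hk₂ : (k : ℝ) < Real.sqrt n)
    (π : Equiv.Perm (Fin n)) (hπ : orderOf π = m) :
    (∃ c ∈ π.cycleFactorsFinset, c.support.card = d ∧
        Nat.lcm (orderOf (π * c⁻¹)) d = m) ∨
      (∀ c ∈ π.cycleType, (c : ℝ) ≤ (n : ℝ) - Real.sqrt n) := by
  by_cases H : ∀ c ∈ π.cycleType, (c : ℝ) ≤ (n : ℝ) - Real.sqrt n
  · exact Or.inr H
  · left
    push_neg at H
    obtain ⟨c, hc, hclt⟩ := H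
    rw [Equiv.Perm.cycleType_def, Multiset.mem_map] at hc
    obtain ⟨σ, hσ, rfl⟩ := hc
    rw [← Finset.mem_def] at hσ
    have hcyc : σ.IsCycle := (Equiv.Perm.mem_cycleFactorsFinset_iff.mp hσ).1
    have hdvd : σ.support.card ∣ m := by
      rw [← hπ, ← Equiv.Perm.lcm_cycleType]
      exact Multiset.dvd_lcm (by
        rw [Equiv.Perm.cycleType_def, Multiset.mem_map]
        exact ⟨σ, Finset.mem_def.mp hσ, rfl⟩)
    have hle : σ.support.card ≤ n := by
      simpa using Finset.card_le_card (Finset.subset_univ σ.support)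
    have heq : σ.support.card = d := huniq _ hdvd hclt hle
    refine ⟨σ, hσ, heq, ?_⟩
    have hdisj := Equiv.Perm.disjoint_mul_inv_of_mem_cycleFactorsFinset hσ
    have := hdisj.orderOf
    rw [inv_mul_cancel_right, hcyc.orderOf, heq] at this
    rw [← this, hπ]
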